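/- Let (Ω, ℱ, P) be a probability space, 𝒢 ⊆ ℱ a sub-σ-algebra, θ a square-integrable real random variable, and ε a square-integrable real random variable with E[ε]=0 and E[ε²]=v, independent of the σ-algebra generated by 𝒢 and θ. Set y = θ + ε, μ_mix = E[θ], μ_loc = E[θ|𝒢]. Let B be a 𝒢-measurable random weight with 0 ≤ B ≤ 1 − c for some constant c > 0. Then the Bayes risks of the global and local oracle shrinkage estimators satisfy E[((1−B)μ_mix + B·y − θ)²] − E[((1−B)μ_loc + B·y − θ)²] = E[(1−B)²·(μ_mix − μ_loc)²] ≥ c²·Var(E[θ|𝒢]). In particular, if Var(E[θ|𝒢]) > 0, then the local oracle estimator has strictly smaller Bayes risk than the global oracle estimator. -/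

import Mathlib

open MeasureTheory ProbabilityTheory

lemma aux_integrable_mul {Ω : Type*} {mΩ : MeasurableSpace Ω} {P : Measure Ω}
    {f g : Ω → ℝ} (hf : MemLp f 2 P) (hg : MemLp g 2 P) :
    Integrable (fun ω => f ω * g ω) P := by
  refine Integrable.mono' (hf.integrable_sq.add hg.integrable_sq)
    (hf.aestronglyMeasurable.mul hg.aestronglyMeasurable)
    (Filter.Eventually.of_forall fun ω => ?_)
  simp only [Real.norm_eq_abs, abs_mul, Pi.add_apply]
  nlinarith [sq_nonneg (|f ω| - |g ω|), abs_nonneg (f ω), abs_nonneg (g ω),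
    sq_abs (f ω), sq_abs (g ω)]

lemma aux_memlp_bdd_mul {Ω : Type*} {mΩ : MeasurableSpace Ω} {P : Measure Ω}
    {f g : Ω → ℝ} (hg : MemLp g 2 P) (hf : AEStronglyMeasurable f P)
    (C : ℝ) (hC : ∀ ω, |f ω| ≤ C) :
    MemLp (fun ω => f ω * g ω) 2 P := by
  refine (memLp_two_iff_integrable_sq (hf.mul hg.aestronglyMeasurable)).2 ?_
  refine Integrable.mono' (hg.integrable_sq.const_mul (C ^ 2))
    ((hf.mul hg.aestronglyMeasurable).mul (hf.mul hg.aestronglyMeasurable)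
      |>.congr (Filter.Eventually.of_forall fun ω => by
        simp only [Pi.mul_apply, Pi.pow_apply]; ring))
    (Filter.Eventually.of_forall fun ω => ?_)
  have h1 := hC ω
  have h2 : (0:ℝ) ≤ |f ω| := abs_nonneg _
  simp only [Real.norm_eq_abs, Pi.mul_apply]
  rw [abs_of_nonneg (sq_nonneg _)]
  have h3 : f ω ^ 2 ≤ C ^ 2 := by nlinarith [sq_abs (f ω)]
  rw [mul_pow]
  exact mul_le_mul_of_nonneg_right h3 (sq_nonneg _)

lemma aux_memlp_condexp {Ω : Type*} {mΩ : MeasurableSpace Ω} (P : Measure Ω)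
    [IsFiniteMeasure P] {m : MeasurableSpace Ω} (hm : m ≤ mΩ) {θ : Ω → ℝ}
    (hθ : MemLp θ 2 P) : MemLp (P[θ|m]) 2 P := by
  set f2 : Lp ℝ 2 P := hθ.toLp θ with hf2
  have hae : (condExpL2 ℝ ℝ hm f2 : Ω → ℝ) =ᵐ[P] P[θ|m] := by
    refine ae_eq_condExp_of_forall_setIntegral_eq hm (hθ.integrable one_le_two)
      (fun s hs hμs => integrableOn_condExpL2_of_measure_ne_top hm hμs.ne f2)
      (fun s hs hμs => ?_) (aestronglyMeasurable_condExpL2 hm f2)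
    rw [integral_condExpL2_eq hm f2 hs hμs.ne]
    exact integral_congr_ae (ae_restrict_of_ae ((hθ.coeFn_toLp)))
  have hmem : MemLp (condExpL2 ℝ ℝ hm f2 : Ω → ℝ) 2 P := by
    exact Lp.memLp _
  exact hmem.ae_eq hae

/-- Theorem 5.1 (oracle dominance of local EB): with features `𝒢 = m`,
true effect `θ`, observation `y = θ + ε` (noise independent of `σ(𝒢, θ)`),
global center `μ_mix = E[θ]`, local center `μ_loc = E[θ|𝒢]`, and a
`𝒢`-measurable weight `0 ≤ B ≤ 1 - c`, the global-minus-local risk gap equals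
`E[(1-B)²(μ_mix - μ_loc)²] ≥ c²·Var(E[θ|𝒢])`; strict dominance follows when
`Var(E[θ|𝒢]) > 0`. -/
theorem stmt_5
    {Ω : Type*} {mΩ : MeasurableSpace Ω} (P : Measure Ω) [IsProbabilityMeasure P]
    (m : MeasurableSpace Ω) (hm : m ≤ mΩ)
    (θ ε : Ω → ℝ) (v : ℝ)
    (hθ : MemLp θ 2 P) (hε : MemLp ε 2 P)
    (hεmean : ∫ ω, ε ω ∂P = 0) (hεsq : ∫ ω, (ε ω) ^ 2 ∂P = v)
    (hindep : Indep (m ⊔ MeasurableSpace.comap θ Real.measurableSpace)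
        (MeasurableSpace.comap ε Real.measurableSpace) P)
    (y : Ω → ℝ) (hy : y = fun ω => θ ω + ε ω)
    (B : Ω → ℝ) (hBmeas : Measurable[m] B)
    (c : ℝ) (hc : 0 < c) (hB : ∀ ω, 0 ≤ B ω ∧ B ω ≤ 1 - c) :
    ((∫ ω, ((1 - B ω) * (∫ ω', θ ω' ∂P) + B ω * y ω - θ ω) ^ 2 ∂P)
        - ∫ ω, ((1 - B ω) * (P[θ|m]) ω + B ω * y ω - θ ω) ^ 2 ∂P
      = ∫ ω, (1 - B ω) ^ 2 * ((∫ ω', θ ω' ∂P) - (P[θ|m]) ω) ^ 2 ∂P)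
    ∧ (∫ ω, (1 - B ω) ^ 2 * ((∫ ω', θ ω' ∂P) - (P[θ|m]) ω) ^ 2 ∂P
        ≥ c ^ 2 * ∫ ω, ((P[θ|m]) ω - ∫ ω', θ ω' ∂P) ^ 2 ∂P)
    ∧ (0 < ∫ ω, ((P[θ|m]) ω - ∫ ω', θ ω' ∂P) ^ 2 ∂P →
        (∫ ω, ((1 - B ω) * (P[θ|m]) ω + B ω * y ω - θ ω) ^ 2 ∂P)
          < ∫ ω, ((1 - B ω) * (∫ ω', θ ω' ∂P) + B ω * y ω - θ ω) ^ 2 ∂P) := by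
  subst hy
  haveI hsf : SigmaFinite (P.trim hm) := inferInstance
  set μ0 : ℝ := ∫ ω', θ ω' ∂P with hμ0
  set L : Ω → ℝ := P[θ|m] with hLdef
  -- basic facts
  have hBm : Measurable[mΩ] B := hBmeas.mono hm le_rfl
  have hmB1 : Measurable[mΩ] (fun ω => 1 - B ω) := measurable_const.sub hBm
  have hmB2 : Measurable[mΩ] (fun ω => (1 - B ω) ^ 2) := hmB1.pow_const 2
  have hmBB : Measurable[mΩ] (fun ω => B ω * (1 - B ω)) := hBm.mul hmB1
  have hLsm : StronglyMeasurable[m] L := stronglyMeasurable_condExp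
  have hθint : Integrable θ P := hθ.integrable one_le_two
  have hεint : Integrable ε P := hε.integrable one_le_two
  have hL2 : MemLp L 2 P := aux_memlp_condexp P hm hθ
  have hLint : Integrable L P := hL2.integrable one_le_two
  -- bounds
  have hBa : ∀ ω, |B ω| ≤ 1 := fun ω => by
    have h1 := (hB ω).1; have h2 := (hB ω).2
    rw [abs_le]; constructor <;> nlinarith [hc.le]
  have hB1 : ∀ ω, |1 - B ω| ≤ 1 := fun ω => by
    have h1 := (hB ω).1; have h2 := (hB ω).2
    rw [abs_le]; constructor <;> nlinarith [hc.le]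
  have hB2 : ∀ ω, |(1 - B ω) ^ 2| ≤ 1 := fun ω => by
    rw [abs_pow]
    calc |1 - B ω| ^ 2 ≤ 1 ^ 2 := by
          exact pow_le_pow_left₀ (abs_nonneg _) (hB1 ω) 2
      _ = 1 := one_pow 2
  have hBB : ∀ ω, |B ω * (1 - B ω)| ≤ 1 := fun ω => by
    rw [abs_mul]
    calc |B ω| * |1 - B ω| ≤ 1 * 1 :=
          mul_le_mul (hBa ω) (hB1 ω) (abs_nonneg _) zero_le_one
      _ = 1 := one_mul 1
  -- MemLp building blocks
  have hh : MemLp (fun ω => μ0 - L ω) 2 P := (memLp_const μ0).sub hL2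
  have hk : MemLp (fun ω => L ω - θ ω) 2 P := hL2.sub hθ
  have hf1 : MemLp (fun ω => (1 - B ω) ^ 2 * (μ0 - L ω)) 2 P :=
    aux_memlp_bdd_mul hh hmB2.aestronglyMeasurable 1 hB2
  have hf2 : MemLp (fun ω => (B ω * (1 - B ω)) * (μ0 - L ω)) 2 P :=
    aux_memlp_bdd_mul hh hmBB.aestronglyMeasurable 1 hBB
  have hbmem : MemLp (fun ω => (1 - B ω) * (L ω - θ ω) + B ω * ε ω) 2 P :=
    (aux_memlp_bdd_mul hk hmB1.aestronglyMeasurable 1 hB1).add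
      (aux_memlp_bdd_mul hε hBm.aestronglyMeasurable 1 hBa)
  have hdmem : MemLp (fun ω => (1 - B ω) * (μ0 - L ω)) 2 P :=
    aux_memlp_bdd_mul hh hmB1.aestronglyMeasurable 1 hB1
  -- integrability of the pieces
  have hIb : Integrable (fun ω => ((1 - B ω) * (L ω - θ ω) + B ω * ε ω) ^ 2) P :=
    hbmem.integrable_sq
  have hIg1 : Integrable (fun ω => ((1 - B ω) ^ 2 * (μ0 - L ω)) * (L ω - θ ω)) P :=
    aux_integrable_mul hf1 hk
  have hIg2 : Integrable (fun ω => ((B ω * (1 - B ω)) * (μ0 - L ω)) * ε ω) P :=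
    aux_integrable_mul hf2 hε
  have hIdd : Integrable (fun ω => ((1 - B ω) * (μ0 - L ω)) ^ 2) P :=
    hdmem.integrable_sq
  have hIdd' : Integrable (fun ω => (1 - B ω) ^ 2 * (μ0 - L ω) ^ 2) P :=
    hIdd.congr (Filter.Eventually.of_forall fun ω => by ring)
  have hIV : Integrable (fun ω => (L ω - μ0) ^ 2) P :=
    (hL2.sub (memLp_const μ0)).integrable_sq
  -- first zero integral: conditional expectation pull-out
  have hzero1 : ∫ ω, ((1 - B ω) ^ 2 * (μ0 - L ω)) * (L ω - θ ω) ∂P = 0 := by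
    set f : Ω → ℝ := fun ω => (1 - B ω) ^ 2 * (μ0 - L ω) with hfdef
    set g : Ω → ℝ := fun ω => L ω - θ ω with hgdef
    have hfsm : StronglyMeasurable[m] f :=
      (((measurable_const.sub hBmeas).pow_const 2).stronglyMeasurable).mul
        (stronglyMeasurable_const.sub hLsm)
    have hgint : Integrable g P := hk.integrable one_le_two
    have hfg : Integrable (f * g) P := hIg1
    have hcondg : P[g|m] =ᵐ[P] 0 := by
      have h1 : P[g|m] =ᵐ[P] P[L|m] - P[θ|m] := condExp_sub hLint hθint m
      have h2 : P[L|m] = L := condExp_of_stronglyMeasurable hm hLsm hLint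
      filter_upwards [h1] with ω hω
      simp only [Pi.zero_apply]
      rw [hω, h2]
      simp [hLdef]
    have hpull : P[f * g|m] =ᵐ[P] 0 := by
      refine (condExp_mul_of_stronglyMeasurable_left hfsm hfg hgint).trans ?_
      filter_upwards [hcondg] with ω hω
      simp only [Pi.mul_apply, Pi.zero_apply] at *
      rw [hω, mul_zero]
    calc ∫ ω, f ω * g ω ∂P = ∫ ω, (P[f * g|m]) ω ∂P := (integral_condExp hm).symm
      _ = 0 := by rw [integral_congr_ae hpull]; simp
  -- second zero integral: independence
  have hzero2 : ∫ ω, ((B ω * (1 - B ω)) * (μ0 - L ω)) * ε ω ∂P = 0 := by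
    set X : Ω → ℝ := fun ω => (B ω * (1 - B ω)) * (μ0 - L ω) with hXdef
    have hXm : Measurable[m] X :=
      (hBmeas.mul (measurable_const.sub hBmeas)).mul
        (measurable_const.sub hLsm.measurable)
    have hindepX : IndepFun X ε P := by
      rw [IndepFun_iff_Indep]
      exact indep_of_indep_of_le_left hindep
        (le_trans (measurable_iff_comap_le.mp hXm) le_sup_left)
    have hXint : Integrable X P := hf2.integrable one_le_two
    have h := IndepFun.integral_mul_eq_mul_integral hindepX hXint.aestronglyMeasurable
      hεint.aestronglyMeasurable
    calc ∫ ω, X ω * ε ω ∂P = (∫ ω, X ω ∂P) * ∫ ω, ε ω ∂P := h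
      _ = 0 := by rw [hεmean, mul_zero]
  -- the decomposition
  have hbeq : ∫ ω, ((1 - B ω) * L ω + B ω * (θ ω + ε ω) - θ ω) ^ 2 ∂P
      = ∫ ω, ((1 - B ω) * (L ω - θ ω) + B ω * ε ω) ^ 2 ∂P :=
    integral_congr_ae (Filter.Eventually.of_forall fun ω => by ring)
  have key : ∫ ω, ((1 - B ω) * μ0 + B ω * (θ ω + ε ω) - θ ω) ^ 2 ∂P
      = (∫ ω, ((1 - B ω) * (L ω - θ ω) + B ω * ε ω) ^ 2 ∂P)
        + ∫ ω, (1 - B ω) ^ 2 * (μ0 - L ω) ^ 2 ∂P := by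
    have hsplit : (fun ω => ((1 - B ω) * μ0 + B ω * (θ ω + ε ω) - θ ω) ^ 2)
        = fun ω => ((1 - B ω) * (L ω - θ ω) + B ω * ε ω) ^ 2
          + (2 * (((1 - B ω) ^ 2 * (μ0 - L ω)) * (L ω - θ ω))
            + (2 * (((B ω * (1 - B ω)) * (μ0 - L ω)) * ε ω)
              + (1 - B ω) ^ 2 * (μ0 - L ω) ^ 2)) := by
      funext ω; ring
    rw [hsplit]
    have hrest2 : Integrable (fun ω => 2 * ((B ω * (1 - B ω)) * (μ0 - L ω) * ε ω)
        + (1 - B ω) ^ 2 * (μ0 - L ω) ^ 2) P := (hIg2.const_mul 2).add hIdd'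
    have hrest1 : Integrable (fun ω => 2 * ((1 - B ω) ^ 2 * (μ0 - L ω) * (L ω - θ ω))
        + (2 * ((B ω * (1 - B ω)) * (μ0 - L ω) * ε ω)
          + (1 - B ω) ^ 2 * (μ0 - L ω) ^ 2)) P := (hIg1.const_mul 2).add hrest2
    have e1 : ∫ ω, (((1 - B ω) * (L ω - θ ω) + B ω * ε ω) ^ 2
        + (2 * ((1 - B ω) ^ 2 * (μ0 - L ω) * (L ω - θ ω))
          + (2 * ((B ω * (1 - B ω)) * (μ0 - L ω) * ε ω)
            + (1 - B ω) ^ 2 * (μ0 - L ω) ^ 2))) ∂P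
        = (∫ ω, ((1 - B ω) * (L ω - θ ω) + B ω * ε ω) ^ 2 ∂P)
          + ∫ ω, (2 * ((1 - B ω) ^ 2 * (μ0 - L ω) * (L ω - θ ω))
            + (2 * ((B ω * (1 - B ω)) * (μ0 - L ω) * ε ω)
              + (1 - B ω) ^ 2 * (μ0 - L ω) ^ 2)) ∂P := integral_add hIb hrest1
    have e2 : ∫ ω, (2 * ((1 - B ω) ^ 2 * (μ0 - L ω) * (L ω - θ ω))
        + (2 * ((B ω * (1 - B ω)) * (μ0 - L ω) * ε ω)
          + (1 - B ω) ^ 2 * (μ0 - L ω) ^ 2)) ∂P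
        = (∫ ω, 2 * ((1 - B ω) ^ 2 * (μ0 - L ω) * (L ω - θ ω)) ∂P)
          + ∫ ω, (2 * ((B ω * (1 - B ω)) * (μ0 - L ω) * ε ω)
            + (1 - B ω) ^ 2 * (μ0 - L ω) ^ 2) ∂P := integral_add (hIg1.const_mul 2) hrest2
    have e3 : ∫ ω, (2 * ((B ω * (1 - B ω)) * (μ0 - L ω) * ε ω)
        + (1 - B ω) ^ 2 * (μ0 - L ω) ^ 2) ∂P
        = (∫ ω, 2 * ((B ω * (1 - B ω)) * (μ0 - L ω) * ε ω) ∂P)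
          + ∫ ω, (1 - B ω) ^ 2 * (μ0 - L ω) ^ 2 ∂P := integral_add (hIg2.const_mul 2) hIdd'
    have e4 : ∫ ω, 2 * ((1 - B ω) ^ 2 * (μ0 - L ω) * (L ω - θ ω)) ∂P
        = 2 * ∫ ω, (1 - B ω) ^ 2 * (μ0 - L ω) * (L ω - θ ω) ∂P :=
      integral_const_mul 2 _
    have e5 : ∫ ω, 2 * ((B ω * (1 - B ω)) * (μ0 - L ω) * ε ω) ∂P
        = 2 * ∫ ω, (B ω * (1 - B ω)) * (μ0 - L ω) * ε ω ∂P :=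
      integral_const_mul 2 _
    rw [e1, e2, e3, e4, e5, hzero1, hzero2]
    ring
  have part1 : (∫ ω, ((1 - B ω) * μ0 + B ω * (θ ω + ε ω) - θ ω) ^ 2 ∂P)
      - ∫ ω, ((1 - B ω) * L ω + B ω * (θ ω + ε ω) - θ ω) ^ 2 ∂P
      = ∫ ω, (1 - B ω) ^ 2 * (μ0 - L ω) ^ 2 ∂P := by
    rw [key, hbeq]; ring
  -- part 2
  have part2 : ∫ ω, (1 - B ω) ^ 2 * (μ0 - L ω) ^ 2 ∂P
      ≥ c ^ 2 * ∫ ω, (L ω - μ0) ^ 2 ∂P := by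
    rw [← integral_const_mul]
    refine integral_mono (hIV.const_mul (c ^ 2)) hIdd' fun ω => ?_
    have h1 := (hB ω).1
    have h2 := (hB ω).2
    have hcb : c ≤ 1 - B ω := by linarith
    have hsq : c * c ≤ (1 - B ω) * (1 - B ω) :=
      mul_le_mul hcb hcb hc.le (by linarith)
    nlinarith [sq_nonneg (L ω - μ0)]
  refine ⟨part1, part2, fun hV => ?_⟩
  have hpos : 0 < c ^ 2 * ∫ ω, (L ω - μ0) ^ 2 ∂P := mul_pos (pow_pos hc 2) hV
  linarith [part1, part2]
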